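/- Let Y ∈ ℝ^{M×N} and let ι_s be the block-averaging operator onto r^s × r^s blocks (assuming r^s divides M and N), and ι_sᵀ its transpose (which replicates each averaged value over its block). Then for any matrix Z of the coarse size, ‖Y - ι_sᵀ Z‖_F² ≤ r^{2s} ‖ι_s(Y) - Z‖_F² + Σ_{I,J} ‖∇_δ Y_{IJ}‖_F²·C, where the second term bounds the within-block variation: specifically, ‖Y - ι_sᵀ ι_s(Y)‖_F² ≤ C(r,s) Σ_{I,J} ‖∇_δ Y_{IJ}‖_F² by a discrete Poincaré inequality on each block, where ∇_δ is the forward-difference operator and Y_{IJ} are the blocks of Y. -/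

import Mathlib

/-- Block-averaging (coarsening) operator `ι_s`: each entry of the coarse matrix is the
average of `Y` over the corresponding `k × k` block. Indices are written as pairs
(block index, within-block index). -/
noncomputable def blockAvg (k m n : ℕ)
    (Y : Fin m × Fin k → Fin n × Fin k → ℝ) : Fin m → Fin n → ℝ :=
  fun I J => (1 / (k : ℝ) ^ 2) * ∑ a : Fin k, ∑ b : Fin k, Y (I, a) (J, b)

/-- The transpose `ι_sᵀ` replicates each coarse value over its block. -/
def blockRefine (k m n : ℕ)
    (Z : Fin m → Fin n → ℝ) : Fin m × Fin k → Fin n × Fin k → ℝ :=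
  fun p q => Z p.1 q.1

/-- Squared Frobenius norm of a fine-scale matrix. -/
noncomputable def frobSqFine (k m n : ℕ)
    (Y : Fin m × Fin k → Fin n × Fin k → ℝ) : ℝ :=
  ∑ p : Fin m × Fin k, ∑ q : Fin n × Fin k, (Y p q) ^ 2

/-- Squared Frobenius norm of a coarse-scale matrix. -/
noncomputable def frobSqCoarse (m n : ℕ) (Z : Fin m → Fin n → ℝ) : ℝ :=
  ∑ I : Fin m, ∑ J : Fin n, (Z I J) ^ 2

/-- Squared Frobenius norm of the forward-difference gradient `∇_δ` of the `(I,J)`-th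
block of `Y` (differences taken within the block). -/
noncomputable def blockGradSq (k m n : ℕ)
    (Y : Fin m × Fin k → Fin n × Fin k → ℝ) (I : Fin m) (J : Fin n) : ℝ :=
  ∑ a : Fin k, ∑ b : Fin k,
    ((if h : a.1 + 1 < k then Y (I, ⟨a.1 + 1, h⟩) (J, b) - Y (I, a) (J, b) else 0) ^ 2 +
     (if h : b.1 + 1 < k then Y (I, a) (J, ⟨b.1 + 1, h⟩) - Y (I, a) (J, b) else 0) ^ 2)

open Finset

private lemma oneD (k : ℕ) (g : ℕ → ℝ) {a a' : ℕ} (ha : a < k) (ha' : a' < k) :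
    (g a - g a') ^ 2 ≤ 4 * k * ∑ i ∈ Finset.range (k-1), (g (i+1) - g i) ^ 2 := by
  set S := ∑ i ∈ Finset.range (k-1), |g (i+1) - g i| with hS
  have h1 : ∀ c : ℕ, c < k → |g c - g 0| ≤ S := by
    intro c hc
    rw [← Finset.sum_range_sub g c]
    refine (Finset.abs_sum_le_sum_abs _ _).trans ?_
    exact Finset.sum_le_sum_of_subset_of_nonneg
      (Finset.range_subset_range.2 (by omega)) (fun i _ _ => abs_nonneg _)
  have habs : |g a - g a'| ≤ 2 * S := by
    calc |g a - g a'| ≤ |g a - g 0| + |g 0 - g a'| := abs_sub_le _ _ _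
    _ = |g a - g 0| + |g a' - g 0| := by rw [abs_sub_comm (g 0)]
    _ ≤ 2 * S := by have := h1 a ha; have := h1 a' ha'; linarith
  have hSsq : S ^ 2 ≤ (k : ℝ) * ∑ i ∈ Finset.range (k-1), (g (i+1) - g i) ^ 2 := by
    calc S ^ 2 ≤ (Finset.range (k-1)).card * ∑ i ∈ Finset.range (k-1), |g (i+1) - g i| ^ 2 :=
          sq_sum_le_card_mul_sum_sq
    _ ≤ (k : ℝ) * ∑ i ∈ Finset.range (k-1), (g (i+1) - g i) ^ 2 := by
        simp only [Finset.card_range, sq_abs]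
        apply mul_le_mul_of_nonneg_right _ (Finset.sum_nonneg fun i _ => sq_nonneg _)
        exact_mod_cast Nat.sub_le k 1
  have h2 : (g a - g a') ^ 2 ≤ (2 * S) ^ 2 := by
    rw [← sq_abs (g a - g a')]
    have h0 : (0:ℝ) ≤ |g a - g a'| := abs_nonneg _
    nlinarith
  nlinarith

/-- grad-square of a single `k×k` block. -/
private noncomputable def gradSq (k : ℕ) (f : Fin k → Fin k → ℝ) : ℝ :=
  ∑ a : Fin k, ∑ b : Fin k,
    ((if h : a.1 + 1 < k then f ⟨a.1 + 1, h⟩ b - f a b else 0) ^ 2 +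
     (if h : b.1 + 1 < k then f a ⟨b.1 + 1, h⟩ - f a b else 0) ^ 2)

private lemma gradSq_nonneg (k : ℕ) (f : Fin k → Fin k → ℝ) : 0 ≤ gradSq k f :=
  Finset.sum_nonneg fun _ _ => Finset.sum_nonneg fun _ _ =>
    add_nonneg (sq_nonneg _) (sq_nonneg _)

private noncomputable def gcol (k : ℕ) (f : Fin k → Fin k → ℝ) (b : Fin k) : ℕ → ℝ :=
  fun i => if h : i < k then f ⟨i, h⟩ b else 0

private noncomputable def grow (k : ℕ) (f : Fin k → Fin k → ℝ) (a : Fin k) : ℕ → ℝ :=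
  fun j => if h : j < k then f a ⟨j, h⟩ else 0

private lemma col_sum (k : ℕ) (hk : 1 ≤ k) (f : Fin k → Fin k → ℝ) (b : Fin k) :
    ∑ a : Fin k, (if h : a.1 + 1 < k then f ⟨a.1 + 1, h⟩ b - f a b else 0) ^ 2
      = ∑ i ∈ Finset.range (k-1), (gcol k f b (i+1) - gcol k f b i) ^ 2 := by
  set φ : ℕ → ℝ :=
    fun i => if _ : i + 1 < k then (gcol k f b (i+1) - gcol k f b i) ^ 2 else 0 with hφ
  have hterm : ∀ a : Fin k,
      (if h : a.1 + 1 < k then f ⟨a.1 + 1, h⟩ b - f a b else 0) ^ 2 = φ a.1 := by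
    intro a
    by_cases h : a.1 + 1 < k
    · have h1 : gcol k f b (a.1+1) = f ⟨a.1+1, h⟩ b := dif_pos h
      have h2 : gcol k f b a.1 = f a b := dif_pos a.2
      simp only [hφ, h, dif_pos, h1, h2]
    · simp [hφ, h]
  have hk' : k - 1 + 1 = k := Nat.sub_add_cancel hk
  calc ∑ a : Fin k, (if h : a.1 + 1 < k then f ⟨a.1 + 1, h⟩ b - f a b else 0) ^ 2
      = ∑ i ∈ Finset.range k, φ i := by
        rw [← Fin.sum_univ_eq_sum_range]; exact Finset.sum_congr rfl fun a _ => hterm a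
    _ = ∑ i ∈ Finset.range (k-1+1), φ i := by rw [hk']
    _ = ∑ i ∈ Finset.range (k-1), φ i + φ (k-1) := Finset.sum_range_succ φ (k-1)
    _ = ∑ i ∈ Finset.range (k-1), (gcol k f b (i+1) - gcol k f b i) ^ 2 := by
        have : φ (k-1) = 0 := dif_neg (by omega)
        rw [this, add_zero]
        exact Finset.sum_congr rfl fun i hi =>
          dif_pos (by have := Finset.mem_range.1 hi; omega)

private lemma row_sum (k : ℕ) (hk : 1 ≤ k) (f : Fin k → Fin k → ℝ) (a : Fin k) :
    ∑ b : Fin k, (if h : b.1 + 1 < k then f a ⟨b.1 + 1, h⟩ - f a b else 0) ^ 2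
      = ∑ j ∈ Finset.range (k-1), (grow k f a (j+1) - grow k f a j) ^ 2 := by
  set φ : ℕ → ℝ :=
    fun j => if _ : j + 1 < k then (grow k f a (j+1) - grow k f a j) ^ 2 else 0 with hφ
  have hterm : ∀ b : Fin k,
      (if h : b.1 + 1 < k then f a ⟨b.1 + 1, h⟩ - f a b else 0) ^ 2 = φ b.1 := by
    intro b
    by_cases h : b.1 + 1 < k
    · have h1 : grow k f a (b.1+1) = f a ⟨b.1+1, h⟩ := dif_pos h
      have h2 : grow k f a b.1 = f a b := dif_pos b.2
      simp only [hφ, h, dif_pos, h1, h2]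
    · simp [hφ, h]
  have hk' : k - 1 + 1 = k := Nat.sub_add_cancel hk
  calc ∑ b : Fin k, (if h : b.1 + 1 < k then f a ⟨b.1 + 1, h⟩ - f a b else 0) ^ 2
      = ∑ j ∈ Finset.range k, φ j := by
        rw [← Fin.sum_univ_eq_sum_range]; exact Finset.sum_congr rfl fun b _ => hterm b
    _ = ∑ j ∈ Finset.range (k-1+1), φ j := by rw [hk']
    _ = ∑ j ∈ Finset.range (k-1), φ j + φ (k-1) := Finset.sum_range_succ φ (k-1)
    _ = ∑ j ∈ Finset.range (k-1), (grow k f a (j+1) - grow k f a j) ^ 2 := by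
        have : φ (k-1) = 0 := dif_neg (by omega)
        rw [this, add_zero]
        exact Finset.sum_congr rfl fun j hj =>
          dif_pos (by have := Finset.mem_range.1 hj; omega)

private lemma split_grad (k : ℕ) (hk : 1 ≤ k) (f : Fin k → Fin k → ℝ) :
    (∑ b : Fin k, ∑ i ∈ Finset.range (k-1), (gcol k f b (i+1) - gcol k f b i) ^ 2)
      + (∑ a : Fin k, ∑ j ∈ Finset.range (k-1), (grow k f a (j+1) - grow k f a j) ^ 2)
      = gradSq k f := by
  rw [gradSq]
  simp_rw [Finset.sum_add_distrib]
  congr 1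
  · calc (∑ b : Fin k, ∑ i ∈ Finset.range (k-1), (gcol k f b (i+1) - gcol k f b i) ^ 2)
        = ∑ b : Fin k, ∑ a : Fin k,
            (if h : a.1 + 1 < k then f ⟨a.1 + 1, h⟩ b - f a b else 0) ^ 2 :=
          Finset.sum_congr rfl fun b _ => (col_sum k hk f b).symm
      _ = ∑ a : Fin k, ∑ b : Fin k,
            (if h : a.1 + 1 < k then f ⟨a.1 + 1, h⟩ b - f a b else 0) ^ 2 :=
          Finset.sum_comm
  · exact Finset.sum_congr rfl fun a _ => (row_sum k hk f a).symm

private lemma pyth (k : ℕ) (hk : 1 ≤ k) (f : Fin k → Fin k → ℝ) (c : ℝ) :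
    ∑ a : Fin k, ∑ b : Fin k, (f a b - c)^2
      = (∑ a : Fin k, ∑ b : Fin k,
          (f a b - (1 / (k:ℝ)^2) * ∑ a' : Fin k, ∑ b' : Fin k, f a' b')^2)
        + (k:ℝ)^2 * ((1 / (k:ℝ)^2) * (∑ a' : Fin k, ∑ b' : Fin k, f a' b') - c)^2 := by
  have hkpos : (0:ℝ) < (k:ℝ) := by exact_mod_cast hk
  set S := ∑ a' : Fin k, ∑ b' : Fin k, f a' b' with hSdef
  set μ := (1 / (k:ℝ)^2) * S with hμdef
  have hμ : (k:ℝ)^2 * μ = S := by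
    rw [hμdef, ← mul_assoc, mul_one_div_cancel (pow_pos hkpos 2).ne', one_mul]
  have expand : ∑ a : Fin k, ∑ b : Fin k, (f a b - c)^2
      = (∑ a : Fin k, ∑ b : Fin k, (f a b - μ)^2) + 2*(μ-c)*S + (k:ℝ)^2*(c^2 - μ^2) := by
    have hpt : ∀ a b : Fin k, (f a b - c)^2
        = (f a b - μ)^2 + 2*(μ - c)*(f a b) + (c^2 - μ^2) := fun a b => by ring
    simp_rw [hpt, Finset.sum_add_distrib, Finset.sum_const, Finset.card_univ,
      Fintype.card_fin, ← Finset.mul_sum, nsmul_eq_mul, ← hSdef]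
    ring
  rw [expand]
  have hkne : (k:ℝ) ≠ 0 := ne_of_gt hkpos
  have hfix : 2*(μ-c)*S + (k:ℝ)^2*(c^2 - μ^2) = (k:ℝ)^2*(μ-c)^2 := by
    rw [hμdef]; field_simp; ring
  linarith [hfix]

private lemma poincare (k : ℕ) (hk : 1 ≤ k) (f : Fin k → Fin k → ℝ) :
    ∑ a : Fin k, ∑ b : Fin k,
      (f a b - (1 / (k:ℝ)^2) * ∑ a' : Fin k, ∑ b' : Fin k, f a' b')^2
      ≤ 8 * (k:ℝ)^2 * gradSq k f := by
  have hkpos : (0:ℝ) < (k:ℝ) := by exact_mod_cast hk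
  set S := ∑ a' : Fin k, ∑ b' : Fin k, f a' b' with hSdef
  set μ := (1 / (k:ℝ)^2) * S with hμdef
  set H : Fin k → ℝ := fun b => ∑ i ∈ Finset.range (k-1), (gcol k f b (i+1) - gcol k f b i)^2
    with hHdef
  set V : Fin k → ℝ := fun a => ∑ j ∈ Finset.range (k-1), (grow k f a (j+1) - grow k f a j)^2
    with hVdef
  -- Jensen step
  have key : ∀ a b : Fin k,
      (f a b - μ)^2 ≤ (1/(k:ℝ)^2) * ∑ a' : Fin k, ∑ b' : Fin k, (f a b - f a' b')^2 := by
    intro a b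
    have hsum : ∑ a' : Fin k, ∑ b' : Fin k, (f a b - f a' b') = (k:ℝ)^2 * (f a b - μ) := by
      have : ∀ a' : Fin k, ∑ b' : Fin k, (f a b - f a' b')
          = (k:ℝ) * f a b - ∑ b' : Fin k, f a' b' := by
        intro a'
        rw [Finset.sum_sub_distrib, Finset.sum_const, Finset.card_univ, Fintype.card_fin,
          nsmul_eq_mul]
      rw [Finset.sum_congr rfl fun a' _ => this a', Finset.sum_sub_distrib,
        Finset.sum_const, Finset.card_univ, Fintype.card_fin, nsmul_eq_mul, ← hSdef]
      have hkne : (k:ℝ) ≠ 0 := ne_of_gt hkpos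
      rw [hμdef]; field_simp
    have cs : (∑ p : Fin k × Fin k, (f a b - f p.1 p.2))^2
        ≤ ((Finset.univ : Finset (Fin k × Fin k)).card : ℝ)
            * ∑ p : Fin k × Fin k, (f a b - f p.1 p.2)^2 :=
      sq_sum_le_card_mul_sum_sq
    rw [Fintype.sum_prod_type, Fintype.sum_prod_type, hsum, Finset.card_univ,
      Fintype.card_prod, Fintype.card_fin] at cs
    push_cast at cs
    have hk2 : (0:ℝ) < (k:ℝ)^2 := by positivity
    rw [div_mul_eq_mul_div, le_div_iff₀ hk2, one_mul]
    nlinarith [cs, hk2]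
  -- pointwise comparison with gradients
  have key2 : ∀ a b a' b' : Fin k,
      (f a b - f a' b')^2 ≤ 8*(k:ℝ)*(H b) + 8*(k:ℝ)*(V a') := by
    intro a b a' b'
    have t1 : (gcol k f b a.1 - gcol k f b a'.1)^2 ≤ 4 * (k:ℝ) * H b := by
      have := oneD k (gcol k f b) a.2 a'.2
      simpa [hHdef] using this
    have t2 : (grow k f a' b.1 - grow k f a' b'.1)^2 ≤ 4 * (k:ℝ) * V a' := by
      have := oneD k (grow k f a') b.2 b'.2
      simpa [hVdef] using this
    have e1 : gcol k f b a.1 = f a b := dif_pos a.2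
    have e1' : gcol k f b a'.1 = f a' b := dif_pos a'.2
    have e2 : grow k f a' b.1 = f a' b := dif_pos b.2
    have e2' : grow k f a' b'.1 = f a' b' := dif_pos b'.2
    rw [e1, e1'] at t1
    rw [e2, e2'] at t2
    nlinarith [sq_nonneg (f a b - f a' b + (f a' b - f a' b')),
      sq_nonneg (f a b - f a' b - (f a' b - f a' b'))]
  calc ∑ a : Fin k, ∑ b : Fin k, (f a b - μ)^2
      ≤ ∑ a : Fin k, ∑ b : Fin k,
          (1/(k:ℝ)^2) * ∑ a' : Fin k, ∑ b' : Fin k, (f a b - f a' b')^2 :=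
        Finset.sum_le_sum fun a _ => Finset.sum_le_sum fun b _ => key a b
    _ ≤ ∑ a : Fin k, ∑ b : Fin k,
          (1/(k:ℝ)^2) * ∑ a' : Fin k, ∑ b' : Fin k, (8*(k:ℝ)*(H b) + 8*(k:ℝ)*(V a')) := by
        refine Finset.sum_le_sum fun a _ => Finset.sum_le_sum fun b _ => ?_
        apply mul_le_mul_of_nonneg_left _ (by positivity)
        exact Finset.sum_le_sum fun a' _ => Finset.sum_le_sum fun b' _ => key2 a b a' b'
    _ = ∑ a : Fin k, ∑ b : Fin k,
          (1/(k:ℝ)^2) * ((k:ℝ)^2 * (8*(k:ℝ)*(H b)) + 8*(k:ℝ)^2*(∑ a0 : Fin k, V a0)) := by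
        refine Finset.sum_congr rfl fun a _ => Finset.sum_congr rfl fun b _ => ?_
        congr 1
        simp only [Finset.sum_add_distrib, Finset.sum_const, Finset.card_univ,
          Fintype.card_fin, nsmul_eq_mul, ← Finset.mul_sum]
        ring
    _ = 8 * (k:ℝ)^2 * ((∑ b : Fin k, H b) + (∑ a : Fin k, V a)) := by
        simp only [Finset.sum_add_distrib, Finset.sum_const, Finset.card_univ,
          Fintype.card_fin, nsmul_eq_mul, ← Finset.mul_sum]
        have hkne : (k:ℝ) ≠ 0 := ne_of_gt hkpos
        field_simp
    _ = 8 * (k:ℝ)^2 * gradSq k f := by rw [split_grad k hk f]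


private lemma frob_expand (k m n : ℕ) (W : Fin m × Fin k → Fin n × Fin k → ℝ) :
    frobSqFine k m n W
      = ∑ I : Fin m, ∑ J : Fin n, ∑ a : Fin k, ∑ b : Fin k, (W (I, a) (J, b)) ^ 2 := by
  rw [frobSqFine]
  simp_rw [Fintype.sum_prod_type]
  exact Finset.sum_congr rfl fun I _ => Finset.sum_comm

private lemma gradSq_eq (k m n : ℕ) (Y : Fin m × Fin k → Fin n × Fin k → ℝ)
    (I : Fin m) (J : Fin n) :
    gradSq k (fun a b => Y (I, a) (J, b)) = blockGradSq k m n Y I J := rfl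

theorem multilevel_error_bound (k : ℕ) (hk : 1 ≤ k) :
    ∃ C : ℝ, 0 < C ∧
      ∀ (m n : ℕ) (Y : Fin m × Fin k → Fin n × Fin k → ℝ) (Z : Fin m → Fin n → ℝ),
        (frobSqFine k m n (fun p q => Y p q - blockRefine k m n Z p q)
            ≤ (k : ℝ) ^ 2 *
                frobSqCoarse m n (fun I J => blockAvg k m n Y I J - Z I J) +
              C * ∑ I : Fin m, ∑ J : Fin n, blockGradSq k m n Y I J) ∧
        (frobSqFine k m n (fun p q => Y p q - blockRefine k m n (blockAvg k m n Y) p q)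
            ≤ C * ∑ I : Fin m, ∑ J : Fin n, blockGradSq k m n Y I J) := by
  have hkpos : (0:ℝ) < (k:ℝ) := by exact_mod_cast hk
  refine ⟨8 * (k:ℝ)^2, by positivity, fun m n Y Z => ?_⟩
  have key : ∀ (c : ℝ) (f : Fin k → Fin k → ℝ),
      ∑ a : Fin k, ∑ b : Fin k, (f a b - c)^2
        ≤ (k:ℝ)^2 * ((1 / (k:ℝ)^2) * (∑ a' : Fin k, ∑ b' : Fin k, f a' b') - c)^2
          + 8 * (k:ℝ)^2 * gradSq k f := by
    intro c f
    rw [pyth k hk f c]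
    linarith [poincare k hk f]
  constructor
  · calc frobSqFine k m n (fun p q => Y p q - blockRefine k m n Z p q)
        = ∑ I : Fin m, ∑ J : Fin n, ∑ a : Fin k, ∑ b : Fin k,
            (Y (I, a) (J, b) - Z I J) ^ 2 := frob_expand k m n _
      _ ≤ ∑ I : Fin m, ∑ J : Fin n,
            ((k:ℝ)^2 * (blockAvg k m n Y I J - Z I J)^2
              + 8 * (k:ℝ)^2 * blockGradSq k m n Y I J) := by
          refine Finset.sum_le_sum fun I _ => Finset.sum_le_sum fun J _ => ?_
          exact key (Z I J) (fun a b => Y (I, a) (J, b))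
      _ = (k : ℝ) ^ 2 * frobSqCoarse m n (fun I J => blockAvg k m n Y I J - Z I J) +
            8 * (k:ℝ)^2 * ∑ I : Fin m, ∑ J : Fin n, blockGradSq k m n Y I J := by
          rw [frobSqCoarse]
          simp only [Finset.sum_add_distrib, Finset.mul_sum]
  · calc frobSqFine k m n (fun p q => Y p q - blockRefine k m n (blockAvg k m n Y) p q)
        = ∑ I : Fin m, ∑ J : Fin n, ∑ a : Fin k, ∑ b : Fin k,
            (Y (I, a) (J, b) - blockAvg k m n Y I J) ^ 2 := frob_expand k m n _
      _ ≤ ∑ I : Fin m, ∑ J : Fin n, 8 * (k:ℝ)^2 * blockGradSq k m n Y I J := by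
          refine Finset.sum_le_sum fun I _ => Finset.sum_le_sum fun J _ => ?_
          exact poincare k hk (fun a b => Y (I, a) (J, b))
      _ = 8 * (k:ℝ)^2 * ∑ I : Fin m, ∑ J : Fin n, blockGradSq k m n Y I J := by
          simp only [Finset.mul_sum]
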